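/- If (X,T) is a topological dynamical system with the shadowing property, then the set of IE-pairs satisfies E(X,T) = E(X,T)⁺, i.e., the IE-pair relation is transitive: if (a₁,a₂) and (a₂,a₃) are IE-pairs, then (a₁,a₃) is an IE-pair. -/

import Mathlib

open scoped Classical

/-- The lower density of a set `I ⊆ ℕ`. -/
noncomputable def lowerDensity (I : Set ℕ) : ℝ :=
  Filter.liminf (fun n => (((Finset.range n).filter (fun k => k ∈ I)).card : ℝ) / n)
    Filter.atTop

/-- `I ⊆ ℕ` is an independence set for the pair `(A₁, A₂)`: for every finite `J ⊆ I` and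
every choice `f` of one of the two sets for each index, `⋂_{j ∈ J} T^{-j}(A_{f j}) ≠ ∅`. -/
def IsIndepSet {X : Type*} (T : X → X) (A₁ A₂ : Set X) (I : Set ℕ) : Prop :=
  ∀ J : Finset ℕ, ↑J ⊆ I → ∀ f : ℕ → Bool,
    ∃ x : X, ∀ j ∈ J, T^[j] x ∈ (if f j then A₁ else A₂)

/-- `(x₁, x₂)` is an IE-pair of `(X, T)`: every pair of open neighborhoods admits an
independence set of positive lower density. -/
def IEPair {X : Type*} [TopologicalSpace X] (T : X → X) (p : X × X) : Prop :=
  ∀ A₁ A₂ : Set X, IsOpen A₁ → IsOpen A₂ → p.1 ∈ A₁ → p.2 ∈ A₂ →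
    ∃ I : Set ℕ, IsIndepSet T A₁ A₂ I ∧ 0 < lowerDensity I

/-- The transitive closure `F⁺`. -/
def plusSet {Z : Type*} (F : Set (Z × Z)) : Set (Z × Z) :=
  {p | Relation.TransGen (fun u v => (u, v) ∈ F) p.1 p.2}

/-- The shadowing property. -/
def HasShadowing {X : Type*} [MetricSpace X] (T : X → X) : Prop :=
  ∀ ε > (0 : ℝ), ∃ δ > (0 : ℝ), ∀ x : ℕ → X,
    (∀ n, dist (T (x n)) (x (n + 1)) ≤ δ) →
    ∃ y : X, ∀ n, dist (x n) (T^[n] y) ≤ ε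

lemma exists_two_of_pos {I : Set ℕ} (h : 0 < lowerDensity I) :
    ∃ m ∈ I, ∃ n ∈ I, m < n := by
  by_contra hc
  push_neg at hc
  have hsub : ∀ m ∈ I, ∀ n ∈ I, m = n := fun m hm n hn =>
    le_antisymm (hc n hn m hm) (hc m hm n hn)
  have h0 : Filter.Tendsto
      (fun n => (((Finset.range n).filter (fun k => k ∈ I)).card : ℝ) / n)
      Filter.atTop (nhds 0) := by
    apply squeeze_zero (g := fun n : ℕ => 1 / (n : ℝ))
    · intro n; positivity
    · intro n
      have hcard : (((Finset.range n).filter (fun k => k ∈ I)).card : ℝ) ≤ 1 := by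
        have : ((Finset.range n).filter (fun k => k ∈ I)).card ≤ 1 :=
          Finset.card_le_one.mpr (by
            intro a ha b hb
            simp only [Finset.mem_filter] at ha hb
            exact hsub a ha.2 b hb.2)
        exact_mod_cast this
      rcases Nat.eq_zero_or_pos n with h | h
      · simp [h]
      · have hn : (0:ℝ) < n := by exact_mod_cast h
        gcongr
    · exact tendsto_one_div_atTop_nhds_zero_nat
  rw [lowerDensity, h0.liminf_eq] at h
  exact lt_irrefl _ h

lemma liminf_pos_aux {u : ℕ → ℝ} {c : ℝ} (hc : 0 < c) (hub : ∀ n, u n ≤ 1)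
    (hlb : ∀ᶠ n in Filter.atTop, c ≤ u n) : 0 < Filter.liminf u Filter.atTop := by
  have hle : c ≤ Filter.liminf u Filter.atTop :=
    Filter.le_liminf_of_le
      ((Filter.isBoundedUnder_of ⟨1, fun n => hub n⟩).isCoboundedUnder_ge) hlb
  linarith

lemma lowerDensity_pos_of_multiples {I : Set ℕ} {N : ℕ} (hN : 0 < N)
    (hmem : ∀ i : ℕ, (i+1)*N ∈ I) : 0 < lowerDensity I := by
  unfold lowerDensity
  apply liminf_pos_aux (c := 1/(2*(N:ℝ))) (by positivity)
  · intro n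
    rcases Nat.eq_zero_or_pos n with h | h
    · simp [h]
    · have hn : (0:ℝ) < n := by exact_mod_cast h
      rw [div_le_one hn]
      have hrn : ((Finset.range n).card : ℝ) = n := by simp
      refine le_trans ?_ hrn.le
      exact_mod_cast Finset.card_filter_le _ _
  · filter_upwards [Filter.eventually_ge_atTop (2*N)] with n hn
    have hn1 : 1 ≤ n := by omega
    have hnpos : (0:ℝ) < n := by
      have : (0:ℕ) < n := by omega
      exact_mod_cast this
    have hNpos : (0:ℝ) < N := by exact_mod_cast hN
    set m := (n-1)/N with hm
    have hmn : (n:ℝ) ≤ (m+1)*N := by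
      have h3 : n - 1 < (m+1)*N := by
        have h1 := Nat.div_add_mod (n-1) N
        have h2 := Nat.mod_lt (n-1) hN
        rw [hm]
        nlinarith [h1, h2]
      have : n ≤ (m+1)*N := by omega
      exact_mod_cast this
    have h2N : (2*(N:ℝ)) ≤ n := by exact_mod_cast hn
    rw [div_le_div_iff₀ (by positivity) hnpos]
    have hcard : m ≤ ((Finset.range n).filter (fun k => k ∈ I)).card := by
      refine le_trans (Finset.card_range m).symm.le ?_
      apply Finset.card_le_card_of_injOn (fun i => (i+1)*N)
      · intro i hi
        simp only [Finset.mem_coe, Finset.mem_range] at hi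
        refine Finset.mem_filter.mpr ⟨?_, hmem i⟩
        refine Finset.mem_range.mpr ?_
        have h2 : m*N ≤ n-1 := Nat.div_mul_le_self _ _
        have h4 : (i+1)*N ≤ m*N := Nat.mul_le_mul_right N hi
        beta_reduce
        omega
      · intro i _ j _ hij
        simp only at hij
        have := Nat.eq_of_mul_eq_mul_right hN hij
        omega
    have hmR : (m:ℝ) ≤ (((Finset.range n).filter (fun k => k ∈ I)).card : ℝ) := by
      exact_mod_cast hcard
    nlinarith

lemma lowerDensity_multiples_pos {N : ℕ} (hN : 0 < N) :
    0 < lowerDensity {n | 0 < n ∧ N ∣ n} := by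
  apply lowerDensity_pos_of_multiples hN
  intro i
  exact ⟨by positivity, ⟨i+1, by ring⟩⟩

def PChain {X : Type*} [MetricSpace X] (T : X → X) (δ : ℝ) (n : ℕ) (u v : X) : Prop :=
  ∃ ch : ℕ → X, ch 0 = u ∧ ch n = v ∧ ∀ i < n, dist (T (ch i)) (ch (i+1)) ≤ δ

lemma PChain.comp {X : Type*} [MetricSpace X] {T : X → X} {δ : ℝ} {m n : ℕ} {u v w : X}
    (h1 : PChain T δ m u v) (h2 : PChain T δ n v w) : PChain T δ (m+n) u w := by
  obtain ⟨c1, hc10, hc1m, hc1s⟩ := h1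
  obtain ⟨c2, hc20, hc2n, hc2s⟩ := h2
  refine ⟨fun i => if i ≤ m then c1 i else c2 (i - m), by simp [hc10], ?_, ?_⟩
  · rcases Nat.eq_zero_or_pos n with h | h
    · subst h
      simp only [Nat.add_zero, le_refl, if_pos]
      rw [hc1m, ← hc20, hc2n]
    · have hle : ¬ (m + n ≤ m) := by omega
      simp only [hle, if_false]
      simpa using hc2n
  · intro i hi
    rcases lt_trichotomy i m with h | h | h
    · have h1le : i ≤ m := h.le
      have h2le : i + 1 ≤ m := h
      simpa [h1le, h2le] using hc1s i h
    · subst h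
      have h1le : i ≤ i := le_refl i
      have h2 : ¬ (i + 1 ≤ i) := by omega
      have hn : 0 < n := by omega
      simp only [h1le, if_pos, h2, if_false]
      rw [hc1m, Nat.add_sub_cancel_left]
      have := hc2s 0 hn
      rw [hc20] at this
      simpa using this
    · have h1 : ¬ (i ≤ m) := by omega
      have h2 : ¬ (i + 1 ≤ m) := by omega
      simp only [h1, h2, if_false]
      have : i - m < n := by omega
      have := hc2s (i - m) this
      have heq : i + 1 - m = (i - m) + 1 := by omega
      rw [heq]
      exact this

lemma pchain_congr {X : Type*} [MetricSpace X] {T : X → X} {δ : ℝ} {m n : ℕ} {u v : X}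
    (h : m = n) (hc : PChain T δ m u v) : PChain T δ n u v := h ▸ hc

/-- Build a chain between `u` and `v` out of a true orbit passing `γ`-close to `u` at time `n`
and `γ`-close to `v` at time `n'`. -/
lemma pchain_of_orbit {X : Type*} [MetricSpace X] {T : X → X} {δ γ : ℝ} {u v x : X} {n n' : ℕ}
    (hδ : 0 < δ) (hnn : n < n') (hγδ : γ ≤ δ/2)
    (hu : ∀ w, dist w u ≤ γ → dist (T w) (T u) ≤ δ/2)
    (hx1 : dist (T^[n] x) u ≤ γ) (hx2 : dist (T^[n'] x) v ≤ γ) :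
    PChain T δ (n' - n) u v := by
  set m := n' - n with hm
  have hm1 : 1 ≤ m := by omega
  refine ⟨fun i => if i = 0 then u else if i = m then v else T^[n+i] x, by simp, ?_, ?_⟩
  · have : m ≠ 0 := by omega
    simp [this]
  · intro i hi
    have hTstep : T (T^[n] x) = T^[n+1] x := (Function.iterate_succ_apply' T n x).symm
    by_cases h0 : i = 0
    · subst h0
      simp only [if_pos rfl]
      have key : dist (T (T^[n] x)) (T u) ≤ δ/2 := hu _ hx1
      by_cases h1 : 1 = m
      · simp only [h1.symm ▸ (rfl : (1:ℕ) = 1), if_neg one_ne_zero, if_pos h1]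
        have hnn' : n + 1 = n' := by omega
        calc dist (T u) v ≤ dist (T u) (T (T^[n] x)) + dist (T (T^[n] x)) v :=
              dist_triangle _ _ _
          _ ≤ δ/2 + γ := add_le_add (by rw [dist_comm]; exact key)
              (by rw [hTstep, hnn']; exact hx2)
          _ ≤ δ := by linarith
      · simp only [if_neg one_ne_zero, if_neg h1]
        rw [← hTstep]
        calc dist (T u) (T (T^[n] x)) = dist (T (T^[n] x)) (T u) := dist_comm _ _
          _ ≤ δ/2 := key
          _ ≤ δ := by linarith
    · have hne : i ≠ m := by omega
      have hne1 : i + 1 ≠ 0 := by omega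
      simp only [if_neg h0, if_neg hne, if_neg hne1]
      have hTstep2 : T (T^[n+i] x) = T^[n+i+1] x := (Function.iterate_succ_apply' T (n+i) x).symm
      by_cases h1 : i + 1 = m
      · simp only [if_pos h1]
        have hnn' : n + i + 1 = n' := by omega
        rw [hTstep2, hnn']
        exact hx2.trans (by linarith)
      · simp only [if_neg h1]
        rw [hTstep2]
        have : n + (i+1) = n + i + 1 := by omega
        rw [this, dist_self]
        exact le_of_lt hδ

lemma chain_append {X : Type*} [MetricSpace X] {T : X → X} {δ : ℝ} {L N : ℕ} {v : X}
    (ch : ℕ → X) (hsteps : ∀ i < L, dist (T (ch i)) (ch (i+1)) ≤ δ)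
    (hend : PChain T δ N (ch L) v) :
    ∃ ch' : ℕ → X, (∀ i ≤ L, ch' i = ch i) ∧ ch' (L+N) = v ∧
      ∀ i < L+N, dist (T (ch' i)) (ch' (i+1)) ≤ δ := by
  obtain ⟨c2, hc20, hc2N, hc2s⟩ := hend
  refine ⟨fun i => if i ≤ L then ch i else c2 (i - L), fun i hi => by simp [hi], ?_, ?_⟩
  · rcases Nat.eq_zero_or_pos N with h | h
    · subst h
      simp only [Nat.add_zero, le_refl, if_pos]
      rw [← hc20, hc2N]
    · have hle : ¬ (L + N ≤ L) := by omega
      simp only [hle, if_false]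
      simpa using hc2N
  · intro i hi
    rcases lt_trichotomy i L with h | h | h
    · have h2le : i + 1 ≤ L := h
      simpa [h.le, h2le] using hsteps i h
    · subst h
      have h2 : ¬ (i + 1 ≤ i) := by omega
      have hn : 0 < N := by omega
      simp only [le_refl, if_pos, h2, if_false]
      rw [Nat.add_sub_cancel_left]
      have := hc2s 0 hn
      rw [hc20] at this
      simpa using this
    · have h1 : ¬ (i ≤ L) := by omega
      have h2 : ¬ (i + 1 ≤ L) := by omega
      simp only [h1, h2, if_false]
      have hlt : i - L < N := by omega
      have := hc2s (i - L) hlt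
      have heq : i + 1 - L = (i - L) + 1 := by omega
      rw [heq]
      exact this

lemma waypoint_chain {X : Type*} [MetricSpace X] {T : X → X} {δ : ℝ} {N : ℕ}
    (pt : Bool → X) (hAC : ∀ s t : Bool, PChain T δ N (pt s) (pt t)) (w : ℕ → Bool) :
    ∀ M : ℕ, ∃ ch : ℕ → X, (∀ j ≤ M, ch (j*N) = pt (w j)) ∧
      ∀ i < M*N, dist (T (ch i)) (ch (i+1)) ≤ δ := by
  intro M
  induction M with
  | zero =>
      refine ⟨fun _ => pt (w 0), fun j hj => ?_, fun i hi => absurd hi (by omega)⟩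
      interval_cases j
      rfl
  | succ M ih =>
      obtain ⟨ch, hw, hs⟩ := ih
      have hend : PChain T δ N (ch (M*N)) (pt (w (M+1))) := by
        rw [hw M le_rfl]; exact hAC _ _
      obtain ⟨ch', hagree, hend', hsteps⟩ := chain_append ch hs hend
      refine ⟨ch', ?_, ?_⟩
      · intro j hj
        rcases Nat.lt_or_ge j (M+1) with h | h
        · have hj' : j ≤ M := by omega
          rw [hagree _ (Nat.mul_le_mul_right N hj')]
          exact hw j hj'
        · have hj2 : j = M+1 := by omega
          subst hj2
          have heq : (M+1)*N = M*N + N := by ring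
          rw [heq]
          exact hend'
      · intro i hi
        have heq : (M+1)*N = M*N + N := by ring
        rw [heq] at hi
        exact hsteps i hi

lemma ie_trans {X : Type*} [MetricSpace X] (T : X → X)
    (hT : Continuous T) (hshad : HasShadowing T) {a b c : X}
    (hab : IEPair T (a, b)) (hbc : IEPair T (b, c)) : IEPair T (a, c) := by
  intro A₁ A₃ hA₁ hA₃ ha hc
  obtain ⟨ε₁, hε₁, hball₁⟩ := Metric.isOpen_iff.mp hA₁ a ha
  obtain ⟨ε₃, hε₃, hball₃⟩ := Metric.isOpen_iff.mp hA₃ c hc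
  have hmin : 0 < min ε₁ ε₃ := lt_min hε₁ hε₃
  set ε := min ε₁ ε₃ / 2 with hε
  have hεpos : 0 < ε := by rw [hε]; linarith
  have hεε₁ : ε < ε₁ := by
    have : min ε₁ ε₃ ≤ ε₁ := min_le_left _ _
    rw [hε]; linarith
  have hεε₃ : ε < ε₃ := by
    have : min ε₁ ε₃ ≤ ε₃ := min_le_right _ _
    rw [hε]; linarith
  obtain ⟨δ, hδpos, hδ⟩ := hshad ε hεpos
  have hcont := Metric.continuous_iff.mp hT
  obtain ⟨γa, hγa, hca⟩ := hcont a (δ/2) (by positivity)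
  obtain ⟨γb, hγb, hcb⟩ := hcont b (δ/2) (by positivity)
  obtain ⟨γc, hγc, hcc⟩ := hcont c (δ/2) (by positivity)
  set γ := min (min γa γb) (min γc (δ/2)) / 2 with hγdef
  have hγpos : 0 < γ := by
    have h1 : 0 < min (min γa γb) (min γc (δ/2)) :=
      lt_min (lt_min hγa hγb) (lt_min hγc (by positivity))
    rw [hγdef]; linarith
  have hγa' : γ < γa := by
    have h1 : min (min γa γb) (min γc (δ/2)) ≤ γa :=
      le_trans (min_le_left _ _) (min_le_left _ _)
    rw [hγdef]; linarith
  have hγb' : γ < γb := by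
    have h1 : min (min γa γb) (min γc (δ/2)) ≤ γb :=
      le_trans (min_le_left _ _) (min_le_right _ _)
    rw [hγdef]; linarith
  have hγc' : γ < γc := by
    have h1 : min (min γa γb) (min γc (δ/2)) ≤ γc :=
      le_trans (min_le_right _ _) (min_le_left _ _)
    rw [hγdef]; linarith
  have hγδ : γ ≤ δ/2 := by
    have h1 : min (min γa γb) (min γc (δ/2)) ≤ δ/2 :=
      le_trans (min_le_right _ _) (min_le_right _ _)
    rw [hγdef]; linarith
  have hmoda : ∀ w, dist w a ≤ γ → dist (T w) (T a) ≤ δ/2 :=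
    fun w hw => (hca w (lt_of_le_of_lt hw hγa')).le
  have hmodb : ∀ w, dist w b ≤ γ → dist (T w) (T b) ≤ δ/2 :=
    fun w hw => (hcb w (lt_of_le_of_lt hw hγb')).le
  have hmodc : ∀ w, dist w c ≤ γ → dist (T w) (T c) ≤ δ/2 :=
    fun w hw => (hcc w (lt_of_le_of_lt hw hγc')).le
  obtain ⟨I, hI, hIpos⟩ := hab (Metric.ball a γ) (Metric.ball b γ)
    Metric.isOpen_ball Metric.isOpen_ball
    (Metric.mem_ball_self hγpos) (Metric.mem_ball_self hγpos)
  obtain ⟨I', hI', hI'pos⟩ := hbc (Metric.ball b γ) (Metric.ball c γ)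
    Metric.isOpen_ball Metric.isOpen_ball
    (Metric.mem_ball_self hγpos) (Metric.mem_ball_self hγpos)
  obtain ⟨n₁, hn₁, n₂, hn₂, hn12⟩ := exists_two_of_pos hIpos
  obtain ⟨m₁, hm₁, m₂, hm₂, hm12⟩ := exists_two_of_pos hI'pos
  set p := n₂ - n₁ with hp
  set q := m₂ - m₁ with hq
  have hp1 : 1 ≤ p := by omega
  have hq1 : 1 ≤ q := by omega
  -- chains among {a, b} of length p
  have hchab : ∀ s t : Bool, PChain T δ p (if s then a else b) (if t then a else b) := by
    intro s t
    obtain ⟨x, hx⟩ := hI {n₁, n₂}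
      (by
        intro k hk
        simp only [Finset.coe_insert, Finset.coe_singleton, Set.mem_insert_iff,
          Set.mem_singleton_iff] at hk
        rcases hk with h | h
        · subst h; exact hn₁
        · subst h; exact hn₂)
      (fun j => if j = n₁ then s else t)
    have hx1 := hx n₁ (by simp)
    have hx2 := hx n₂ (by simp)
    rw [if_pos rfl] at hx1
    rw [if_neg (by omega : ¬ n₂ = n₁)] at hx2
    cases s <;> cases t <;> simp only [if_true, if_false, Bool.false_eq_true] at hx1 hx2 ⊢ <;>
      [ (exact pchain_of_orbit hδpos hn12 hγδ hmodb (Metric.mem_ball.mp hx1).le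
          (Metric.mem_ball.mp hx2).le) ;
        (exact pchain_of_orbit hδpos hn12 hγδ hmodb (Metric.mem_ball.mp hx1).le
          (Metric.mem_ball.mp hx2).le) ;
        (exact pchain_of_orbit hδpos hn12 hγδ hmoda (Metric.mem_ball.mp hx1).le
          (Metric.mem_ball.mp hx2).le) ;
        (exact pchain_of_orbit hδpos hn12 hγδ hmoda (Metric.mem_ball.mp hx1).le
          (Metric.mem_ball.mp hx2).le) ]
  have hchbc : ∀ s t : Bool, PChain T δ q (if s then b else c) (if t then b else c) := by
    intro s t
    obtain ⟨x, hx⟩ := hI' {m₁, m₂}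
      (by
        intro k hk
        simp only [Finset.coe_insert, Finset.coe_singleton, Set.mem_insert_iff,
          Set.mem_singleton_iff] at hk
        rcases hk with h | h
        · subst h; exact hm₁
        · subst h; exact hm₂)
      (fun j => if j = m₁ then s else t)
    have hx1 := hx m₁ (by simp)
    have hx2 := hx m₂ (by simp)
    rw [if_pos rfl] at hx1
    rw [if_neg (by omega : ¬ m₂ = m₁)] at hx2
    cases s <;> cases t <;> simp only [if_true, if_false, Bool.false_eq_true] at hx1 hx2 ⊢ <;>
      [ (exact pchain_of_orbit hδpos hm12 hγδ hmodc (Metric.mem_ball.mp hx1).le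
          (Metric.mem_ball.mp hx2).le) ;
        (exact pchain_of_orbit hδpos hm12 hγδ hmodc (Metric.mem_ball.mp hx1).le
          (Metric.mem_ball.mp hx2).le) ;
        (exact pchain_of_orbit hδpos hm12 hγδ hmodb (Metric.mem_ball.mp hx1).le
          (Metric.mem_ball.mp hx2).le) ;
        (exact pchain_of_orbit hδpos hm12 hγδ hmodb (Metric.mem_ball.mp hx1).le
          (Metric.mem_ball.mp hx2).le) ]
  -- shorthand chains
  have Cab : PChain T δ p a b := by simpa using hchab true false
  have Cba : PChain T δ p b a := by simpa using hchab false true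
  have Cbb : PChain T δ p b b := by simpa using hchab false false
  have Caa : PChain T δ p a a := by simpa using hchab true true
  have Cbc : PChain T δ q b c := by simpa using hchbc true false
  have Ccb : PChain T δ q c b := by simpa using hchbc false true
  have Cbb' : PChain T δ q b b := by simpa using hchbc true true
  have Ccc : PChain T δ q c c := by simpa using hchbc false false
  set N := 2*p + 2*q with hN
  have hNpos : 0 < N := by omega
  set pt : Bool → X := fun s => if s then a else c with hpt
  have hAC : ∀ s t : Bool, PChain T δ N (pt s) (pt t) := by
    intro s t
    cases s <;> cases t <;> simp only [hpt, if_true, if_false, Bool.false_eq_true]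
    · -- c → c : q + p + p + q
      exact pchain_congr (by omega) (((Ccb.comp Cbb).comp Cbb).comp Cbc)
    · -- c → a : q + q + p + p
      exact pchain_congr (by omega) (((Ccb.comp Cbb').comp Cbb).comp Cba)
    · -- a → c : p + p + q + q
      exact pchain_congr (by omega) (((Cab.comp Cbb).comp Cbc).comp Ccc)
    · -- a → a : p + q + q + p
      exact pchain_congr (by omega) (((Cab.comp Cbb').comp Cbb').comp Cba)
  refine ⟨{n | 0 < n ∧ N ∣ n}, ?_, lowerDensity_multiples_pos hNpos⟩
  intro J hJ f
  set M := J.sup id with hM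
  set w : ℕ → Bool := fun j => f (j*N) with hw
  obtain ⟨ch, hwch, hs⟩ := waypoint_chain pt hAC w M
  set po : ℕ → X := fun n => if n ≤ M*N then ch n else T^[n - M*N] (ch (M*N)) with hpo
  have hpo_eq : ∀ n, M*N ≤ n → po n = T^[n - M*N] (ch (M*N)) := by
    intro n hn
    rcases Nat.eq_or_lt_of_le hn with h | h
    · subst h
      simp [hpo]
    · have : ¬ (n ≤ M*N) := by omega
      simp [hpo, this]
  have hpochain : ∀ n, dist (T (po n)) (po (n+1)) ≤ δ := by
    intro n
    rcases Nat.lt_or_ge n (M*N) with h | h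
    · have h1 : n ≤ M*N := h.le
      have h2 : n + 1 ≤ M*N := h
      simp only [hpo, h1, h2, if_pos]
      exact hs n h
    · rw [hpo_eq n h, hpo_eq (n+1) (by omega)]
      have heq : n + 1 - M*N = (n - M*N) + 1 := by omega
      rw [heq, Function.iterate_succ_apply', dist_self]
      exact hδpos.le
  obtain ⟨y, hy⟩ := hδ po hpochain
  refine ⟨y, ?_⟩
  intro k hk
  obtain ⟨hkpos, j, hkj⟩ := hJ hk
  -- k = N * j
  have hkj' : k = j * N := by rw [hkj, Nat.mul_comm]
  have hjM : j ≤ M := by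
    have hkM : k ≤ M := Finset.le_sup (f := id) hk
    have : j ≤ j * N := Nat.le_mul_of_pos_right j hNpos
    omega
  have hkMN : k ≤ M*N := by
    rw [hkj']
    exact Nat.mul_le_mul_right N hjM
  have hpok : po k = pt (f k) := by
    have h1 : po k = ch k := by simp [hpo, hkMN]
    rw [h1, hkj', hwch j hjM]
  have hdist := hy k
  rw [hpok] at hdist
  cases hfk : f k with
  | false =>
      rw [hfk] at hdist
      simp only [hpt, Bool.false_eq_true, if_false] at hdist
      simp only [Bool.false_eq_true, if_false]
      apply hball₃
      rw [Metric.mem_ball, dist_comm]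
      exact lt_of_le_of_lt hdist hεε₃
  | true =>
      rw [hfk] at hdist
      simp only [hpt, if_true] at hdist
      simp only [if_true]
      apply hball₁
      rw [Metric.mem_ball, dist_comm]
      exact lt_of_le_of_lt hdist hεε₁

/-- If a TDS `(X,T)` has the shadowing property, then `E(X,T) = E(X,T)⁺`; in particular the
IE-pair relation is transitive. -/
theorem stmt2 {X : Type*} [MetricSpace X] [CompactSpace X] (T : X → X)
    (hT : Continuous T) (hshad : HasShadowing T) :
    {p : X × X | IEPair T p} = plusSet {p : X × X | IEPair T p} := by
  apply Set.Subset.antisymm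
  · intro p hp
    exact Relation.TransGen.single hp
  · intro p hp
    have key : ∀ u v : X,
        Relation.TransGen (fun u v => (u, v) ∈ {p : X × X | IEPair T p}) u v →
        IEPair T (u, v) := by
      intro u v h
      induction h with
      | single h => exact h
      | tail _ h2 ih => exact ie_trans T hT hshad ih h2
    exact key p.1 p.2 hp
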